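/- Let (Xₙ) be a random walk with i.i.d. increments ξ and q ≥ 0 with max{q, β} > 0 where β ≥ 0, and suppose E[e^{βξ}] ≥ e^q. Let T₀ = inf{n ≥ 1 : Xₙ ≥ 0} with X₀ = 0. Then E[e^{-qT₀ + βX_{T₀}} 1_{T₀<∞}] ≥ 1. -/

import Mathlib

open MeasureTheory ProbabilityTheory Real

variable {Ω : Type*}

/-- The random walk `X n = x + ξ 1 + ... + ξ n` (increments indexed from 1). -/
noncomputable def walk (x : ℝ) (ξ : ℕ → Ω → ℝ) (n : ℕ) (ω : Ω) : ℝ :=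
  x + ∑ i ∈ Finset.range n, ξ (i + 1) ω

/-- `τ_v`: first time `n ≥ 0` with `X n ≥ v` (`⊤` if never). -/
noncomputable def hitFrom0 (X : ℕ → Ω → ℝ) (v : ℝ) (ω : Ω) : ℕ∞ :=
  ⨅ n ∈ {n : ℕ | v ≤ X n ω}, (n : ℕ∞)

/-- `T_v`: first time `n ≥ 1` with `X n ≥ v` (`⊤` if never). -/
noncomputable def hitFrom1 (X : ℕ → Ω → ℝ) (v : ℝ) (ω : Ω) : ℕ∞ :=
  ⨅ n ∈ {n : ℕ | 1 ≤ n ∧ v ≤ X n ω}, (n : ℕ∞)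

/-- The discounted reward `e^{-qτ} g(X_τ) 1_{τ<∞}`, as an `ℝ≥0∞`-valued r.v. -/
noncomputable def payoff (q : ℝ) (g : ℝ → ℝ) (X : ℕ → Ω → ℝ) (τ : Ω → ℕ∞) (ω : Ω) : ENNReal :=
  if τ ω = ⊤ then 0
  else ENNReal.ofReal (Real.exp (-q * ((τ ω).toNat : ℝ)) * g (X ((τ ω).toNat) ω))

/-- The natural filtration (as σ-algebras) of the process `X`. -/
def natSigma [MeasurableSpace Ω] (X : ℕ → Ω → ℝ) (n : ℕ) : MeasurableSpace Ω :=
  ⨆ i ∈ Set.Iic n, MeasurableSpace.comap (X i) inferInstance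

/-- `τ` is a stopping time (with values in `ℕ ∪ {∞}`) of the natural filtration of `X`. -/
def IsStopping [MeasurableSpace Ω] (X : ℕ → Ω → ℝ) (τ : Ω → ℕ∞) : Prop :=
  ∀ n : ℕ, MeasurableSet[natSigma X n] {ω | τ ω ≤ (n : ℕ∞)}


section
open Filter Topology
set_option linter.unusedSectionVars false
set_option linter.unusedVariables false

namespace S12
variable {Ω : Type*} [MeasurableSpace Ω]

noncomputable def X (ξ : ℕ → Ω → ℝ) (n : ℕ) (ω : Ω) : ℝ := ∑ i ∈ Finset.range n, ξ (i + 1) ω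

lemma walk_eq (ξ : ℕ → Ω → ℝ) (n : ℕ) (ω : Ω) : walk 0 ξ n ω = X ξ n ω := zero_add _

lemma X_zero (ξ : ℕ → Ω → ℝ) (ω : Ω) : X ξ 0 ω = 0 := by simp [X]

lemma X_succ (ξ : ℕ → Ω → ℝ) (n : ℕ) (ω : Ω) : X ξ (n + 1) ω = X ξ n ω + ξ (n + 1) ω := by
  simp [X, Finset.sum_range_succ]

lemma measurable_X (ξ : ℕ → Ω → ℝ) (hmeas : ∀ i, Measurable (ξ i)) (n : ℕ) :
    Measurable (X ξ n) := by
  exact Finset.measurable_sum _ fun i _ => hmeas (i + 1)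

/-- event `T > n` -/
def B (ξ : ℕ → Ω → ℝ) (n : ℕ) : Set Ω := {ω | ∀ k, 1 ≤ k → k ≤ n → X ξ k ω < 0}

/-- event `T = n+1` -/
def C (ξ : ℕ → Ω → ℝ) (n : ℕ) : Set Ω := B ξ n ∩ {ω | 0 ≤ X ξ (n + 1) ω}

lemma measurableSet_B (ξ : ℕ → Ω → ℝ) (hmeas : ∀ i, Measurable (ξ i)) (n : ℕ) :
    MeasurableSet (B ξ n) := by
  have : B ξ n = ⋂ k ∈ Finset.Icc 1 n, {ω | X ξ k ω < 0} := by
    ext ω; simp [B, Finset.mem_Icc]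
  rw [this]
  exact Finset.measurableSet_biInter _ fun k _ =>
    measurableSet_lt (measurable_X ξ hmeas k) measurable_const

lemma measurableSet_C (ξ : ℕ → Ω → ℝ) (hmeas : ∀ i, Measurable (ξ i)) (n : ℕ) :
    MeasurableSet (C ξ n) :=
  (measurableSet_B ξ hmeas n).inter
    (measurableSet_le measurable_const (measurable_X ξ hmeas (n + 1)))

noncomputable def F (q β : ℝ) (ξ : ℕ → Ω → ℝ) (n : ℕ) : Ω → ENNReal :=
  (B ξ n).indicator fun ω => ENNReal.ofReal (Real.exp (-q * n + β * X ξ n ω))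

noncomputable def G (q β : ℝ) (ξ : ℕ → Ω → ℝ) (n : ℕ) : Ω → ENNReal :=
  (C ξ n).indicator fun ω => ENNReal.ofReal (Real.exp (-q * (n + 1) + β * X ξ (n + 1) ω))

lemma measurable_F (q β : ℝ) (ξ : ℕ → Ω → ℝ) (hmeas : ∀ i, Measurable (ξ i)) (n : ℕ) :
    Measurable (F q β ξ n) := by
  refine Measurable.indicator ?_ (measurableSet_B ξ hmeas n)
  exact (measurable_const.add ((measurable_X ξ hmeas n).const_mul β)).exp.ennreal_ofReal

lemma measurable_G (q β : ℝ) (ξ : ℕ → Ω → ℝ) (hmeas : ∀ i, Measurable (ξ i)) (n : ℕ) :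
    Measurable (G q β ξ n) := by
  refine Measurable.indicator ?_ (measurableSet_C ξ hmeas n)
  exact (measurable_const.add ((measurable_X ξ hmeas (n + 1)).const_mul β)).exp.ennreal_ofReal
/-- σ-algebra generated by ξ_1,...,ξ_n -/
def sigmaUpTo (ξ : ℕ → Ω → ℝ) (n : ℕ) : MeasurableSpace Ω :=
  ⨆ i ∈ Set.Icc 1 n, MeasurableSpace.comap (ξ i) inferInstance

lemma sigmaUpTo_le (ξ : ℕ → Ω → ℝ) (hmeas : ∀ i, Measurable (ξ i)) (n : ℕ) :
    sigmaUpTo ξ n ≤ ‹MeasurableSpace Ω› :=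
  iSup₂_le fun i _ => measurable_iff_comap_le.1 (hmeas i)

lemma measurable_xi_sigmaUpTo (ξ : ℕ → Ω → ℝ) {n k : ℕ} (hk1 : 1 ≤ k) (hkn : k ≤ n) :
    Measurable[sigmaUpTo ξ n] (ξ k) :=
  Measurable.of_comap_le (le_iSup₂ (f := fun i (_ : i ∈ Set.Icc 1 n) =>
    MeasurableSpace.comap (ξ i) inferInstance) k ⟨hk1, hkn⟩)

lemma indep_tail (μ : Measure Ω) (ξ : ℕ → Ω → ℝ) (hmeas : ∀ i, Measurable (ξ i))
    (hindep : iIndepFun ξ μ) (n : ℕ) :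
    Indep (sigmaUpTo ξ n) (MeasurableSpace.comap (ξ (n + 1)) inferInstance) μ := by
  have h := indep_iSup_of_disjoint (m := fun i => MeasurableSpace.comap (ξ i) inferInstance)
    (fun i => measurable_iff_comap_le.1 (hmeas i)) hindep
    (S := Set.Icc 1 n) (T := {n + 1}) ?_
  · simpa [sigmaUpTo] using h
  · simp [Set.disjoint_singleton_right, Set.mem_Icc]

lemma lintegral_mul_indep (μ : Measure Ω) (ξ : ℕ → Ω → ℝ) (hmeas : ∀ i, Measurable (ξ i))
    (hindep : iIndepFun ξ μ) (n : ℕ)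
    (f : Ω → ENNReal) (hf : Measurable[sigmaUpTo ξ n] f)
    (g : ℝ → ENNReal) (hg : Measurable g) :
    ∫⁻ ω, f ω * g (ξ (n + 1) ω) ∂μ = (∫⁻ ω, f ω ∂μ) * ∫⁻ ω, g (ξ (n + 1) ω) ∂μ := by
  exact lintegral_mul_eq_lintegral_mul_lintegral_of_independent_measurableSpace
    (sigmaUpTo_le ξ hmeas n) (measurable_iff_comap_le.1 (hmeas (n + 1)))
    (indep_tail μ ξ hmeas hindep n) hf (hg.comp (Measurable.of_comap_le le_rfl))

lemma measurableSet_B_sigmaUpTo (ξ : ℕ → Ω → ℝ) (n : ℕ) :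
    MeasurableSet[sigmaUpTo ξ n] (B ξ n) := by
  have hX : ∀ k, 1 ≤ k → k ≤ n → Measurable[sigmaUpTo ξ n] (X ξ k) := by
    intro k hk1 hkn
    exact Finset.measurable_sum _ fun i hi => measurable_xi_sigmaUpTo ξ (Nat.succ_le_succ (Nat.zero_le i))
      (Nat.succ_le_of_lt (Finset.mem_range.1 hi) |>.trans hkn)
  have : B ξ n = ⋂ k ∈ Finset.Icc 1 n, {ω | X ξ k ω < 0} := by
    ext ω; simp [B, Finset.mem_Icc]
  rw [this]
  exact Finset.measurableSet_biInter _ fun k hk =>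
    measurableSet_lt (hX k (Finset.mem_Icc.1 hk).1 (Finset.mem_Icc.1 hk).2) measurable_const

lemma measurable_F_sigmaUpTo (q β : ℝ) (ξ : ℕ → Ω → ℝ) (n : ℕ) :
    Measurable[sigmaUpTo ξ n] (F q β ξ n) := by
  have hX : Measurable[sigmaUpTo ξ n] (X ξ n) := by
    refine Finset.measurable_sum _ fun i hi => measurable_xi_sigmaUpTo ξ
      (Nat.succ_le_succ (Nat.zero_le i)) (Nat.succ_le_of_lt (Finset.mem_range.1 hi))
  exact Measurable.indicator
    ((measurable_const.add (hX.const_mul β)).exp.ennreal_ofReal) (measurableSet_B_sigmaUpTo ξ n)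

/-- pointwise decomposition -/
lemma F_mul_decomp (q β : ℝ) (ξ : ℕ → Ω → ℝ) (n : ℕ) (ω : Ω) :
    F q β ξ n ω * ENNReal.ofReal (Real.exp (-q + β * ξ (n + 1) ω))
      = F q β ξ (n + 1) ω + G q β ξ n ω := by
  have hBsucc : ω ∈ B ξ (n + 1) ↔ ω ∈ B ξ n ∧ X ξ (n + 1) ω < 0 := by
    constructor
    · intro h
      exact ⟨fun k h1 h2 => h k h1 (h2.trans (Nat.le_succ n)), h (n + 1) (Nat.succ_le_succ (Nat.zero_le n)) le_rfl⟩
    · rintro ⟨h, hlt⟩ k h1 h2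
      rcases Nat.lt_succ_iff_lt_or_eq.1 (Nat.lt_succ_of_le h2) with h' | rfl
      · exact h k h1 (Nat.lt_succ_iff.1 h')
      · exact hlt
  by_cases hB : ω ∈ B ξ n
  · rw [F, Set.indicator_of_mem hB, ← ENNReal.ofReal_mul (Real.exp_nonneg _), ← Real.exp_add]
    have harg : -q * n + β * X ξ n ω + (-q + β * ξ (n + 1) ω)
        = -q * (n + 1 : ℕ) + β * X ξ (n + 1) ω := by
      rw [X_succ]; push_cast; ring
    rw [harg]
    by_cases hlt : X ξ (n + 1) ω < 0
    · rw [F, Set.indicator_of_mem (hBsucc.2 ⟨hB, hlt⟩), G,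
        Set.indicator_of_notMem (fun hc : ω ∈ C ξ n => absurd hc.2 (not_le.2 hlt)), add_zero]
    · rw [F, Set.indicator_of_notMem (fun hc => hlt (hBsucc.1 hc).2), G,
        Set.indicator_of_mem (show ω ∈ C ξ n from ⟨hB, not_lt.1 hlt⟩), zero_add]
      norm_num
  · rw [F, Set.indicator_of_notMem hB, zero_mul, F,
      Set.indicator_of_notMem (fun hc => hB (hBsucc.1 hc).1), G,
      Set.indicator_of_notMem (fun hc => hB hc.1), add_zero]

section Main
variable (μ : Measure Ω) [IsProbabilityMeasure μ]

lemma B_zero (ξ : ℕ → Ω → ℝ) : B ξ 0 = Set.univ := by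
  ext ω; simp only [B, Set.mem_setOf_eq, Set.mem_univ, iff_true]
  intro k h1 h2; omega

lemma lintegral_F_zero (q β : ℝ) (ξ : ℕ → Ω → ℝ) : ∫⁻ ω, F q β ξ 0 ω ∂μ = 1 := by
  have : ∀ ω, F q β ξ 0 ω = 1 := by
    intro ω
    rw [F, B_zero, Set.indicator_univ]
    simp [X_zero]
  simp only [this]
  simp

lemma moment_eq (μ : Measure Ω) (β : ℝ) (ξ : ℕ → Ω → ℝ) (hmeas : ∀ i, Measurable (ξ i))
    (hident : ∀ i, μ.map (ξ i) = μ.map (ξ 1)) (i : ℕ) :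
    ∫⁻ ω, ENNReal.ofReal (Real.exp (β * ξ i ω)) ∂μ
      = ∫⁻ ω, ENNReal.ofReal (Real.exp (β * ξ 1 ω)) ∂μ := by
  have hg : Measurable fun x : ℝ => ENNReal.ofReal (Real.exp (β * x)) :=
    (measurable_id.const_mul β).exp.ennreal_ofReal
  rw [← lintegral_map hg (hmeas i), hident i, lintegral_map hg (hmeas 1)]

lemma step (ξ : ℕ → Ω → ℝ) (hmeas : ∀ i, Measurable (ξ i))
    (hindep : iIndepFun ξ μ)
    (hident : ∀ i, μ.map (ξ i) = μ.map (ξ 1))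
    (q β : ℝ)
    (hsub : ENNReal.ofReal (Real.exp q)
      ≤ ∫⁻ ω, ENNReal.ofReal (Real.exp (β * ξ 1 ω)) ∂μ) (n : ℕ) :
    ∫⁻ ω, F q β ξ n ω ∂μ ≤ (∫⁻ ω, F q β ξ (n + 1) ω ∂μ) + ∫⁻ ω, G q β ξ n ω ∂μ := by
  set Φ := ∫⁻ ω, ENNReal.ofReal (Real.exp (β * ξ 1 ω)) ∂μ with hΦ
  have hg : Measurable fun x : ℝ => ENNReal.ofReal (Real.exp (-q + β * x)) :=
    (measurable_const.add (measurable_id.const_mul β)).exp.ennreal_ofReal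
  have h1 : (1 : ENNReal) ≤ ENNReal.ofReal (Real.exp (-q)) * Φ := by
    calc (1 : ENNReal) = ENNReal.ofReal (Real.exp (-q)) * ENNReal.ofReal (Real.exp q) := by
          rw [← ENNReal.ofReal_mul (Real.exp_nonneg _), ← Real.exp_add]; simp
      _ ≤ ENNReal.ofReal (Real.exp (-q)) * Φ := mul_le_mul_right hsub _
  have h2 : ∫⁻ ω, ENNReal.ofReal (Real.exp (-q + β * ξ (n + 1) ω)) ∂μ
      = ENNReal.ofReal (Real.exp (-q)) * Φ := by
    simp_rw [Real.exp_add, ENNReal.ofReal_mul (Real.exp_nonneg (-q))]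
    rw [lintegral_const_mul _ (((hmeas (n+1)).const_mul β).exp.ennreal_ofReal),
      hΦ, moment_eq μ β ξ hmeas hident (n + 1)]
  calc ∫⁻ ω, F q β ξ n ω ∂μ = (∫⁻ ω, F q β ξ n ω ∂μ) * 1 := (mul_one _).symm
    _ ≤ (∫⁻ ω, F q β ξ n ω ∂μ) * (ENNReal.ofReal (Real.exp (-q)) * Φ) := mul_le_mul_right h1 _
    _ = (∫⁻ ω, F q β ξ n ω ∂μ) * ∫⁻ ω, ENNReal.ofReal (Real.exp (-q + β * ξ (n + 1) ω)) ∂μ := by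
          rw [h2]
    _ = ∫⁻ ω, F q β ξ n ω * ENNReal.ofReal (Real.exp (-q + β * ξ (n + 1) ω)) ∂μ :=
          (lintegral_mul_indep μ ξ hmeas hindep n _ (measurable_F_sigmaUpTo q β ξ n) _ hg).symm
    _ = ∫⁻ ω, (F q β ξ (n + 1) ω + G q β ξ n ω) ∂μ := by
          congr 1; ext ω; exact F_mul_decomp q β ξ n ω
    _ = (∫⁻ ω, F q β ξ (n + 1) ω ∂μ) + ∫⁻ ω, G q β ξ n ω ∂μ :=
          lintegral_add_left (measurable_F q β ξ hmeas (n + 1)) _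

lemma iterate (ξ : ℕ → Ω → ℝ) (hmeas : ∀ i, Measurable (ξ i))
    (hindep : iIndepFun ξ μ)
    (hident : ∀ i, μ.map (ξ i) = μ.map (ξ 1))
    (q β : ℝ)
    (hsub : ENNReal.ofReal (Real.exp q)
      ≤ ∫⁻ ω, ENNReal.ofReal (Real.exp (β * ξ 1 ω)) ∂μ) (n : ℕ) :
    1 ≤ (∫⁻ ω, F q β ξ n ω ∂μ) + ∑ k ∈ Finset.range n, ∫⁻ ω, G q β ξ k ω ∂μ := by
  induction n with
  | zero => simp [lintegral_F_zero μ q β ξ]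
  | succ n ih =>
      refine ih.trans ?_
      rw [Finset.sum_range_succ]
      calc (∫⁻ ω, F q β ξ n ω ∂μ) + ∑ k ∈ Finset.range n, ∫⁻ ω, G q β ξ k ω ∂μ
          ≤ ((∫⁻ ω, F q β ξ (n + 1) ω ∂μ) + ∫⁻ ω, G q β ξ n ω ∂μ)
            + ∑ k ∈ Finset.range n, ∫⁻ ω, G q β ξ k ω ∂μ :=
            add_le_add_left (step μ ξ hmeas hindep hident q β hsub n) _
        _ = (∫⁻ ω, F q β ξ (n + 1) ω ∂μ)
            + (∑ k ∈ Finset.range n, (∫⁻ ω, G q β ξ k ω ∂μ) + ∫⁻ ω, G q β ξ n ω ∂μ) := by ring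


lemma payoff_eq_tsum (q β : ℝ) (ξ : ℕ → Ω → ℝ) (ω : Ω) :
    payoff q (fun z => Real.exp (β * z)) (walk 0 ξ) (hitFrom1 (walk 0 ξ) 0) ω
      = ∑' k : ℕ, G q β ξ k ω := by
  have hw : ∀ n, walk 0 ξ n ω = X ξ n ω := fun n => walk_eq ξ n ω
  by_cases hex : ∃ n, 1 ≤ n ∧ 0 ≤ X ξ n ω
  · set m := Nat.find hex with hm
    have hm1 : 1 ≤ m := (Nat.find_spec hex).1
    have hmX : 0 ≤ X ξ m ω := (Nat.find_spec hex).2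
    have hT : hitFrom1 (walk 0 ξ) 0 ω = (m : ℕ∞) := by
      apply le_antisymm
      · exact iInf₂_le m (by simp only [Set.mem_setOf_eq, hw]; exact Nat.find_spec hex)
      · refine le_iInf₂ fun n hn => ?_
        have : m ≤ n := Nat.find_min' hex (by simpa [hw] using hn)
        exact_mod_cast this
    have htop : hitFrom1 (walk 0 ξ) 0 ω ≠ ⊤ := by rw [hT]; exact ENat.coe_ne_top m
    have htn : (hitFrom1 (walk 0 ξ) 0 ω).toNat = m := by rw [hT]; simp
    rw [payoff, if_neg htop, htn, hw, ← Real.exp_add]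
    have hsingle : ∀ j : ℕ, j ≠ m - 1 → G q β ξ j ω = 0 := by
      intro j hj
      rw [G, Set.indicator_of_notMem]
      intro hc
      rcases lt_trichotomy (j + 1) m with hlt | heq | hgt
      · have := Nat.find_min hex hlt
        push_neg at this
        exact absurd hc.2 (not_le.2 (this (Nat.succ_le_succ (Nat.zero_le j))))
      · exact hj (by omega)
      · have hmj : m ≤ j := by omega
        exact absurd (hc.1 m hm1 hmj) (not_lt.2 hmX)
    rw [tsum_eq_single (m - 1) hsingle]
    have hm' : m - 1 + 1 = m := by omega
    rw [G, Set.indicator_of_mem]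
    · rw [hm']
      congr 2
      rw [Nat.cast_sub hm1]
      push_cast
      ring
    · constructor
      · intro k hk1 hk2
        have hklt : k < m := by omega
        have := Nat.find_min hex hklt
        push_neg at this
        exact this hk1
      · rw [hm']; exact hmX
  · push_neg at hex
    have hT : hitFrom1 (walk 0 ξ) 0 ω = ⊤ := by
      rw [hitFrom1]
      have : {n : ℕ | 1 ≤ n ∧ 0 ≤ walk 0 ξ n ω} = ∅ := by
        ext n; simp only [Set.mem_setOf_eq, Set.mem_empty_iff_false, iff_false, not_and, not_le]
        intro hn
        rw [hw]
        exact hex n hn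
      rw [this]
      simp
    rw [payoff, if_pos hT]
    symm
    rw [ENNReal.tsum_eq_zero]
    intro k
    rw [G, Set.indicator_of_notMem]
    intro hc
    exact absurd hc.2 (not_le.2 (hex (k + 1) (Nat.succ_le_succ (Nat.zero_le k))))

lemma lintegral_payoff_eq (μ : Measure Ω) (q β : ℝ) (ξ : ℕ → Ω → ℝ)
    (hmeas : ∀ i, Measurable (ξ i)) :
    ∫⁻ ω, payoff q (fun z => Real.exp (β * z)) (walk 0 ξ) (hitFrom1 (walk 0 ξ) 0) ω ∂μ
      = ∑' k : ℕ, ∫⁻ ω, G q β ξ k ω ∂μ := by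
  rw [← lintegral_tsum fun k => (measurable_G q β ξ hmeas k).aemeasurable]
  congr 1
  ext ω
  exact payoff_eq_tsum q β ξ ω

theorem main (μ : Measure Ω) [IsProbabilityMeasure μ] (ξ : ℕ → Ω → ℝ)
    (hmeas : ∀ i, Measurable (ξ i))
    (hindep : iIndepFun ξ μ)
    (hident : ∀ i, μ.map (ξ i) = μ.map (ξ 1))
    (q β : ℝ)
    (hsub : ENNReal.ofReal (Real.exp q)
      ≤ ∫⁻ ω, ENNReal.ofReal (Real.exp (β * ξ 1 ω)) ∂μ)
    (hvan : Tendsto (fun n => ∫⁻ ω, F q β ξ n ω ∂μ) atTop (𝓝 0)) :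
    1 ≤ ∫⁻ ω, payoff q (fun z => Real.exp (β * z)) (walk 0 ξ)
          (hitFrom1 (walk 0 ξ) 0) ω ∂μ := by
  set Stot := ∑' k : ℕ, ∫⁻ ω, G q β ξ k ω ∂μ with hS
  have h1 : ∀ n, 1 ≤ (∫⁻ ω, F q β ξ n ω ∂μ) + Stot := fun n =>
    (iterate μ ξ hmeas hindep hident q β hsub n).trans
      (add_le_add_right (ENNReal.sum_le_tsum _) _)
  have h2 : Tendsto (fun n => (∫⁻ ω, F q β ξ n ω ∂μ) + Stot) atTop (𝓝 (0 + Stot)) :=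
    hvan.add tendsto_const_nhds
  have h3 : 1 ≤ 0 + Stot := ge_of_tendsto' h2 h1
  rw [zero_add] at h3
  rw [lintegral_payoff_eq μ q β ξ hmeas]
  exact h3


lemma F_le (q β : ℝ) (hq : 0 ≤ q) (hβ : 0 ≤ β) (ξ : ℕ → Ω → ℝ) (n : ℕ) (ω : Ω) :
    F q β ξ n ω ≤ ENNReal.ofReal (Real.exp (-q * n)) := by
  rw [F]
  by_cases hB : ω ∈ B ξ n
  · rw [Set.indicator_of_mem hB]
    refine ENNReal.ofReal_le_ofReal (Real.exp_le_exp.2 ?_)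
    have hXle : X ξ n ω ≤ 0 := by
      rcases Nat.eq_zero_or_pos n with rfl | hn
      · rw [X_zero]
      · exact le_of_lt (hB n hn le_rfl)
    nlinarith
  · rw [Set.indicator_of_notMem hB]
    exact zero_le

lemma F_le_one (q β : ℝ) (hq : 0 ≤ q) (hβ : 0 ≤ β) (ξ : ℕ → Ω → ℝ) (n : ℕ) (ω : Ω) :
    F q β ξ n ω ≤ 1 := by
  refine (F_le q β hq hβ ξ n ω).trans ?_
  rw [← ENNReal.ofReal_one]
  refine ENNReal.ofReal_le_ofReal ?_
  rw [← Real.exp_zero]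
  refine Real.exp_le_exp.2 ?_
  have : (0:ℝ) ≤ n := Nat.cast_nonneg n
  nlinarith

lemma tendsto_zero_of_le {a b : ℕ → ENNReal} (h : ∀ n, a n ≤ b n)
    (hb : Tendsto b atTop (𝓝 0)) : Tendsto a atTop (𝓝 0) :=
  tendsto_of_tendsto_of_tendsto_of_le_of_le tendsto_const_nhds hb (fun n => zero_le) h

lemma van_pos (μ : Measure Ω) [IsProbabilityMeasure μ] (q β : ℝ) (hq : 0 < q) (hβ : 0 ≤ β)
    (ξ : ℕ → Ω → ℝ) :
    Tendsto (fun n => ∫⁻ ω, F q β ξ n ω ∂μ) atTop (𝓝 0) := by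
  refine tendsto_zero_of_le (b := fun n => ENNReal.ofReal (Real.exp (-q * n))) ?_ ?_
  · intro n
    calc ∫⁻ ω, F q β ξ n ω ∂μ ≤ ∫⁻ _, ENNReal.ofReal (Real.exp (-q * n)) ∂μ :=
          lintegral_mono fun ω => F_le q β hq.le hβ ξ n ω
      _ = ENNReal.ofReal (Real.exp (-q * n)) := by simp
  · have h1 : Tendsto (fun n : ℕ => -q * n) atTop atBot := by
      exact Tendsto.const_mul_atTop_of_neg (neg_lt_zero.2 hq) tendsto_natCast_atTop_atTop
    have h2 : Tendsto (fun n : ℕ => Real.exp (-q * n)) atTop (𝓝 0) :=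
      Real.tendsto_exp_atBot.comp h1
    simpa [Function.comp_def] using (ENNReal.continuous_ofReal.tendsto 0).comp h2

lemma van_atBot (μ : Measure Ω) [IsProbabilityMeasure μ] (q β : ℝ) (hq : 0 ≤ q) (hβ : 0 < β)
    (ξ : ℕ → Ω → ℝ) (hmeas : ∀ i, Measurable (ξ i))
    (hae : ∀ᵐ ω ∂μ, Tendsto (fun n => X ξ n ω) atTop atBot) :
    Tendsto (fun n => ∫⁻ ω, F q β ξ n ω ∂μ) atTop (𝓝 0) := by
  have h0 : (0 : ENNReal) = ∫⁻ _, (0 : ENNReal) ∂μ := by simp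
  rw [h0]
  refine tendsto_lintegral_of_dominated_convergence (fun _ => 1)
    (fun n => measurable_F q β ξ hmeas n) (fun n => Filter.Eventually.of_forall fun ω =>
      F_le_one q β hq hβ.le ξ n ω) (by simp) ?_
  filter_upwards [hae] with ω hω
  have hbound : ∀ n, F q β ξ n ω ≤ ENNReal.ofReal (Real.exp (β * X ξ n ω)) := by
    intro n
    rw [F]
    by_cases hB : ω ∈ B ξ n
    · rw [Set.indicator_of_mem hB]
      refine ENNReal.ofReal_le_ofReal (Real.exp_le_exp.2 ?_)
      have : (0:ℝ) ≤ q * n := mul_nonneg hq (Nat.cast_nonneg n)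
      linarith
    · rw [Set.indicator_of_notMem hB]; exact zero_le
  have h1 : Tendsto (fun n => β * X ξ n ω) atTop atBot :=
    Tendsto.const_mul_atBot hβ hω
  have h2 : Tendsto (fun n => ENNReal.ofReal (Real.exp (β * X ξ n ω))) atTop (𝓝 0) := by
    simpa [Function.comp_def] using (ENNReal.continuous_ofReal.tendsto 0).comp (Real.tendsto_exp_atBot.comp h1)
  exact tendsto_zero_of_le hbound h2


lemma slln_atBot (μ : Measure Ω) [IsProbabilityMeasure μ] (Y : ℕ → Ω → ℝ)
    (hint : Integrable (Y 0) μ)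
    (hindep : Pairwise (fun i j => IndepFun (Y i) (Y j) μ))
    (hident : ∀ i, IdentDistrib (Y i) (Y 0) μ μ)
    (hm : ∫ ω, Y 0 ω ∂μ < 0) :
    ∀ᵐ ω ∂μ, Tendsto (fun n => ∑ i ∈ Finset.range n, Y i ω) atTop atBot := by
  set m := ∫ ω, Y 0 ω ∂μ with hmdef
  filter_upwards [strong_law_ae_real Y hint hindep hident] with ω hω
  have hev : ∀ᶠ n : ℕ in atTop, (∑ i ∈ Finset.range n, Y i ω) / n ≤ m / 2 :=
    hω.eventually_le_const (by linarith)
  have hub : Tendsto (fun n : ℕ => (n : ℝ) * (m / 2)) atTop atBot :=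
    Tendsto.atTop_mul_const_of_neg (by linarith) tendsto_natCast_atTop_atTop
  refine tendsto_atBot_mono' atTop ?_ hub
  filter_upwards [hev, eventually_ge_atTop 1] with n hn hn1
  have hnpos : (0:ℝ) < n := by exact_mod_cast hn1
  calc ∑ i ∈ Finset.range n, Y i ω = n * ((∑ i ∈ Finset.range n, Y i ω) / n) := by
        field_simp
    _ ≤ n * (m / 2) := by
        exact mul_le_mul_of_nonneg_left hn hnpos.le


lemma degenerate_or_atBot (ξ : ℕ → Ω → ℝ) (hmeas : ∀ i, Measurable (ξ i))
    (hindep : iIndepFun ξ μ)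
    (hident : ∀ i, μ.map (ξ i) = μ.map (ξ 1))
    (β : ℝ) (hβ : 0 < β)
    (hΦ : ∫⁻ ω, ENNReal.ofReal (Real.exp (β * ξ 1 ω)) ∂μ = 1) :
    (∀ᵐ ω ∂μ, ξ 1 ω = 0) ∨ (∀ᵐ ω ∂μ, Tendsto (fun n => X ξ n ω) atTop atBot) := by
  have hmeasE : Measurable fun ω => Real.exp (β * ξ 1 ω) := ((hmeas 1).const_mul β).exp
  have hnnE : 0 ≤ᵐ[μ] fun ω => Real.exp (β * ξ 1 ω) :=
    Filter.Eventually.of_forall fun ω => Real.exp_nonneg _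
  have hintE : Integrable (fun ω => Real.exp (β * ξ 1 ω)) μ := by
    refine ⟨hmeasE.aestronglyMeasurable, ?_⟩
    rw [hasFiniteIntegral_iff_ofReal hnnE, hΦ]
    exact ENNReal.one_lt_top
  have hIE : ∫ ω, Real.exp (β * ξ 1 ω) ∂μ = 1 := by
    rw [integral_eq_lintegral_of_nonneg_ae hnnE hmeasE.aestronglyMeasurable, hΦ]
    simp
  have hbd : ∀ x : ℝ, β * max x 0 ≤ Real.exp (β * x) := by
    intro x
    rcases le_or_gt x 0 with hx | hx
    · rw [max_eq_right hx]
      simpa using Real.exp_nonneg (β * x)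
    · rw [max_eq_left hx.le]
      have := Real.add_one_le_exp (β * x)
      linarith
  have hpos : Integrable (fun ω => max (ξ 1 ω) 0) μ := by
    refine Integrable.mono (hintE.const_mul (1 / β)) ((hmeas 1).max measurable_const).aestronglyMeasurable ?_
    refine Filter.Eventually.of_forall fun ω => ?_
    rw [Real.norm_eq_abs, Real.norm_eq_abs, abs_of_nonneg (le_max_right _ _),
      abs_of_nonneg (by positivity)]
    rw [one_div, ← div_eq_inv_mul, le_div_iff₀ hβ, mul_comm]
    exact hbd (ξ 1 ω)
  by_cases hI : Integrable (ξ 1) μ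
  · -- integrable case: Jensen
    set m := ∫ ω, ξ 1 ω ∂μ with hmdef
    have hgi : Integrable ((fun x => Real.exp x) ∘ fun ω => β * ξ 1 ω) μ := hintE
    have havg : ⨍ ω, β * ξ 1 ω ∂μ = β * m := by
      rw [average_eq_integral, integral_const_mul]
    have hjen : Real.exp (β * m) ≤ 1 := by
      have h := ConvexOn.map_average_le convexOn_exp Real.continuous_exp.continuousOn
        isClosed_univ (Filter.Eventually.of_forall fun ω => Set.mem_univ _)
        (hI.const_mul β) hgi
      rw [havg, average_eq_integral] at h
      calc Real.exp (β * m) ≤ ∫ ω, Real.exp (β * ξ 1 ω) ∂μ := h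
        _ = 1 := hIE
    have hm0 : m ≤ 0 := by
      have hb0 : Real.exp (β * m) ≤ Real.exp 0 := by rw [Real.exp_zero]; exact hjen
      have : β * m ≤ 0 := Real.exp_le_exp.1 hb0
      nlinarith
    rcases hm0.lt_or_eq with hlt | heq
    · right
      have hae := slln_atBot μ (fun i => ξ (i + 1)) hI
        (fun i j hij => hindep.indepFun (by omega : i + 1 ≠ j + 1))
        (fun i => ⟨(hmeas (i + 1)).aemeasurable, (hmeas 1).aemeasurable, hident (i + 1)⟩)
        hlt
      filter_upwards [hae] with ω hω
      exact hω
    · -- mean zero: strict Jensen forces degeneracy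
      left
      rcases strictConvexOn_exp.ae_eq_const_or_map_average_lt
        Real.continuous_exp.continuousOn isClosed_univ
        (Filter.Eventually.of_forall fun ω => Set.mem_univ _)
        (hI.const_mul β) hgi with hconst | hltj
      · filter_upwards [hconst] with ω hω
        rw [havg] at hω
        simp only [Function.const_apply] at hω
        have h2 : β * ξ 1 ω = 0 := by rw [hω, heq, mul_zero]
        exact (mul_eq_zero.1 h2).resolve_left (ne_of_gt hβ)
      · exfalso
        rw [havg, heq, mul_zero, Real.exp_zero, average_eq_integral, hIE] at hltj
        exact lt_irrefl 1 hltj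
  · -- non-integrable case: truncation
    right
    have hnegmeas : Measurable fun ω => max (-ξ 1 ω) 0 := (hmeas 1).neg.max measurable_const
    have hnegid : (fun ω => max (ξ 1 ω) 0 - max (-ξ 1 ω) 0) = ξ 1 := by
      funext ω; exact max_zero_sub_max_neg_zero_eq_self (ξ 1 ω)
    have hnegnotint : ¬ Integrable (fun ω => max (-ξ 1 ω) 0) μ := by
      intro h
      exact hI (hnegid ▸ hpos.sub h)
    have htop : ∫⁻ ω, ENNReal.ofReal (max (-ξ 1 ω) 0) ∂μ = ⊤ := by
      by_contra hne
      exact hnegnotint ⟨hnegmeas.aestronglyMeasurable,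
        (hasFiniteIntegral_iff_ofReal (Filter.Eventually.of_forall fun ω => le_max_right _ _)).2
          (lt_top_iff_ne_top.2 hne)⟩
    have hsup : (⨆ M : ℕ, ∫⁻ ω, ENNReal.ofReal (min (max (-ξ 1 ω) 0) M) ∂μ)
        = ∫⁻ ω, ENNReal.ofReal (max (-ξ 1 ω) 0) ∂μ := by
      rw [← lintegral_iSup]
      · congr 1; funext ω
        apply le_antisymm
        · exact iSup_le fun M => ENNReal.ofReal_le_ofReal (min_le_left _ _)
        · refine le_trans (le_of_eq ?_) (le_iSup _ ⌈max (-ξ 1 ω) 0⌉₊)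
          rw [min_eq_left (Nat.le_ceil _)]
      · exact fun M => (hnegmeas.min measurable_const).ennreal_ofReal
      · intro M N hMN ω
        exact ENNReal.ofReal_le_ofReal (le_min (min_le_left _ _)
          ((min_le_right _ _).trans (by exact_mod_cast Nat.cast_le.2 hMN)))
    have hPfin : ∫⁻ ω, ENNReal.ofReal (max (ξ 1 ω) 0) ∂μ < ⊤ :=
      (hasFiniteIntegral_iff_ofReal (Filter.Eventually.of_forall fun ω => le_max_right _ _)).1
        hpos.2
    obtain ⟨M, hM⟩ : ∃ M : ℕ, ∫⁻ ω, ENNReal.ofReal (max (ξ 1 ω) 0) ∂μ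
        < ∫⁻ ω, ENNReal.ofReal (min (max (-ξ 1 ω) 0) M) ∂μ := by
      rw [← lt_iSup_iff, hsup, htop]
      exact hPfin
    -- the truncated variable has negative mean
    set g := fun ω => min (max (-ξ 1 ω) 0) (M : ℝ) with hgdef
    have hgmeas : Measurable g := hnegmeas.min measurable_const
    have hgnn : ∀ ω, 0 ≤ g ω := fun ω => le_min (le_max_right _ _) (Nat.cast_nonneg M)
    have hgint : Integrable g μ := by
      refine Integrable.mono (integrable_const (M : ℝ)) hgmeas.aestronglyMeasurable ?_
      refine Filter.Eventually.of_forall fun ω => ?_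
      rw [Real.norm_eq_abs, Real.norm_eq_abs, abs_of_nonneg (hgnn ω),
        abs_of_nonneg (Nat.cast_nonneg M)]
      exact min_le_right _ _
    have hkey : ∀ x : ℝ, max x (-(M:ℝ)) = max x 0 - min (max (-x) 0) (M:ℝ) := by
      intro x
      rcases le_or_gt 0 x with hx | hx
      · rw [max_eq_left hx, max_eq_left (by linarith : -(M:ℝ) ≤ x),
          max_eq_right (by linarith : -x ≤ 0), min_eq_left (Nat.cast_nonneg M), sub_zero]
      · rw [max_eq_right hx.le, max_eq_left (by linarith : (0:ℝ) ≤ -x), zero_sub]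
        rcases le_total (-x) (M:ℝ) with h | h
        · rw [min_eq_left h, max_eq_left (by linarith), neg_neg]
        · rw [min_eq_right h, max_eq_right (by linarith)]
    have htrunc_int : Integrable (fun ω => max (ξ 1 ω) (-(M:ℝ))) μ := by
      have : (fun ω => max (ξ 1 ω) (-(M:ℝ))) = fun ω => max (ξ 1 ω) 0 - g ω := by
        funext ω; exact hkey (ξ 1 ω)
      rw [this]
      exact hpos.sub hgint
    have htrunc_neg : ∫ ω, max (ξ 1 ω) (-(M:ℝ)) ∂μ < 0 := by
      have heq2 : ∫ ω, max (ξ 1 ω) (-(M:ℝ)) ∂μ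
          = (∫ ω, max (ξ 1 ω) 0 ∂μ) - ∫ ω, g ω ∂μ := by
        rw [← integral_sub hpos hgint]
        congr 1; funext ω; exact hkey (ξ 1 ω)
      have hP : ∫ ω, max (ξ 1 ω) 0 ∂μ = (∫⁻ ω, ENNReal.ofReal (max (ξ 1 ω) 0) ∂μ).toReal :=
        integral_eq_lintegral_of_nonneg_ae (f := fun ω => max (ξ 1 ω) 0)
          (Filter.Eventually.of_forall fun ω => le_max_right _ _)
          ((hmeas 1).max measurable_const).aestronglyMeasurable
      have hN : ∫ ω, g ω ∂μ = (∫⁻ ω, ENNReal.ofReal (g ω) ∂μ).toReal :=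
        integral_eq_lintegral_of_nonneg_ae (f := g) (Filter.Eventually.of_forall hgnn)
          hgmeas.aestronglyMeasurable
      have hNfin : ∫⁻ ω, ENNReal.ofReal (g ω) ∂μ < ⊤ :=
        (hasFiniteIntegral_iff_ofReal (Filter.Eventually.of_forall hgnn)).1 hgint.2
      rw [heq2, hP, hN, sub_neg]
      exact ENNReal.toReal_lt_toReal hPfin.ne hNfin.ne |>.2 hM
    have hae := slln_atBot μ (fun i ω => max (ξ (i + 1) ω) (-(M:ℝ))) htrunc_int
      (fun i j hij => by
        have h1 := hindep.indepFun (by omega : i + 1 ≠ j + 1)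
        exact h1.comp (measurable_id.max measurable_const) (measurable_id.max measurable_const))
      (fun i => by
        have h1 : IdentDistrib (ξ (i + 1)) (ξ 1) μ μ :=
          ⟨(hmeas (i + 1)).aemeasurable, (hmeas 1).aemeasurable, hident (i + 1)⟩
        exact h1.comp (measurable_id.max measurable_const))
      htrunc_neg
    filter_upwards [hae] with ω hω
    refine tendsto_atBot_mono (fun n => ?_) hω
    exact Finset.sum_le_sum fun i _ => le_max_left _ _


lemma van_degenerate (ξ : ℕ → Ω → ℝ) (hmeas : ∀ i, Measurable (ξ i))
    (h : ∀ᵐ ω ∂μ, ξ 1 ω = 0) (q β : ℝ) (hq : 0 ≤ q) (hβ : 0 ≤ β) :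
    Tendsto (fun n => ∫⁻ ω, F q β ξ n ω ∂μ) atTop (𝓝 0) := by
  have hB1 : μ (B ξ 1) = 0 := by
    refine measure_mono_null (fun ω hω => ?_) (ae_iff.1 h)
    have hX1 : X ξ 1 ω = ξ 1 ω := by simp [X]
    have := hω 1 le_rfl le_rfl
    rw [hX1] at this
    exact ne_of_lt this
  have hzero : ∀ n, 1 ≤ n → ∫⁻ ω, F q β ξ n ω ∂μ = 0 := by
    intro n hn
    refine le_antisymm ?_ (zero_le)
    calc ∫⁻ ω, F q β ξ n ω ∂μ ≤ ∫⁻ ω, (B ξ n).indicator (fun _ => 1) ω ∂μ := by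
          refine lintegral_mono fun ω => ?_
          by_cases hB : ω ∈ B ξ n
          · rw [Set.indicator_of_mem hB]
            exact F_le_one q β hq hβ ξ n ω
          · rw [F, Set.indicator_of_notMem hB, Set.indicator_of_notMem hB]
      _ = μ (B ξ n) := by
          rw [lintegral_indicator (measurableSet_B ξ hmeas n)]
          simp
      _ ≤ μ (B ξ 1) := by
          refine measure_mono fun ω hω k hk1 hk2 => hω k hk1 (hk2.trans hn)
      _ = 0 := hB1
  refine Tendsto.congr' ?_ (tendsto_const_nhds (x := (0:ENNReal)))
  filter_upwards [eventually_ge_atTop 1] with n hn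
  exact (hzero n hn).symm

lemma payoff_mono (q' β : ℝ) (hq' : 0 ≤ q') (ξ : ℕ → Ω → ℝ) (ω : Ω) :
    payoff q' (fun z => Real.exp (β * z)) (walk 0 ξ) (hitFrom1 (walk 0 ξ) 0) ω
      ≤ payoff 0 (fun z => Real.exp (β * z)) (walk 0 ξ) (hitFrom1 (walk 0 ξ) 0) ω := by
  rw [payoff, payoff]
  split_ifs with h
  · exact le_rfl
  · refine ENNReal.ofReal_le_ofReal ?_
    refine mul_le_mul_of_nonneg_right (Real.exp_le_exp.2 ?_) (Real.exp_nonneg _)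
    have ht : (0:ℝ) ≤ ((hitFrom1 (walk 0 ξ) 0 ω).toNat : ℝ) := Nat.cast_nonneg _
    nlinarith

theorem final (μ : Measure Ω) [IsProbabilityMeasure μ]
    (ξ : ℕ → Ω → ℝ) (hmeas : ∀ i, Measurable (ξ i))
    (hindep : iIndepFun ξ μ)
    (hident : ∀ i, μ.map (ξ i) = μ.map (ξ 1))
    (q β : ℝ) (hq : 0 ≤ q) (hβ : 0 ≤ β) (hqβ : 0 < max q β)
    (hsub : ENNReal.ofReal (Real.exp q)
      ≤ ∫⁻ ω, ENNReal.ofReal (Real.exp (β * ξ 1 ω)) ∂μ) :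
    1 ≤ ∫⁻ ω, payoff q (fun z => Real.exp (β * z)) (walk 0 ξ)
          (hitFrom1 (walk 0 ξ) 0) ω ∂μ := by
  rcases eq_or_lt_of_le hq with hq0 | hq0
  · -- q = 0
    subst hq0
    have hβ0 : 0 < β := by simpa using hqβ
    have h1 : 1 ≤ ∫⁻ ω, ENNReal.ofReal (Real.exp (β * ξ 1 ω)) ∂μ := by
      simpa using hsub
    rcases eq_or_lt_of_le h1 with hΦ1 | hΦ1
    · rcases degenerate_or_atBot μ ξ hmeas hindep hident β hβ0 hΦ1.symm with hdeg | hae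
      · exact main μ ξ hmeas hindep hident 0 β hsub
          (van_degenerate μ ξ hmeas hdeg 0 β le_rfl hβ)
      · exact main μ ξ hmeas hindep hident 0 β hsub
          (van_atBot μ 0 β le_rfl hβ0 ξ hmeas hae)
    · obtain ⟨q', hq', hsub'⟩ : ∃ q' : ℝ, 0 < q' ∧ ENNReal.ofReal (Real.exp q')
          ≤ ∫⁻ ω, ENNReal.ofReal (Real.exp (β * ξ 1 ω)) ∂μ := by
        by_cases htop : (∫⁻ ω, ENNReal.ofReal (Real.exp (β * ξ 1 ω)) ∂μ) = ⊤
        · exact ⟨1, one_pos, htop ▸ le_top⟩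
        · have h2 : 1 < (∫⁻ ω, ENNReal.ofReal (Real.exp (β * ξ 1 ω)) ∂μ).toReal := by
            have := (ENNReal.toReal_lt_toReal ENNReal.one_ne_top htop).2 hΦ1
            simpa using this
          refine ⟨Real.log (∫⁻ ω, ENNReal.ofReal (Real.exp (β * ξ 1 ω)) ∂μ).toReal,
            Real.log_pos h2, ?_⟩
          rw [Real.exp_log (by linarith), ENNReal.ofReal_toReal htop]
      have hmain := main μ ξ hmeas hindep hident q' β hsub' (van_pos μ q' β hq' hβ ξ)
      exact hmain.trans (lintegral_mono fun ω => payoff_mono q' β hq'.le ξ ω)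
  · exact main μ ξ hmeas hindep hident q β hsub (van_pos μ q β hq0 hβ ξ)

end Main
end S12
end

/-- random walk started at `0` with i.i.d. increments `ξ`,
`q, β ≥ 0` with `max {q, β} > 0` and `E[e^{βξ}] ≥ e^q`. Then with
`T₀ = inf {n ≥ 1 : Xₙ ≥ 0}`, `E[e^{-qT₀ + βX_{T₀}} 1_{T₀<∞}] ≥ 1`. -/
theorem stmt12 [MeasurableSpace Ω] (μ : Measure Ω) [IsProbabilityMeasure μ]
    (ξ : ℕ → Ω → ℝ) (hmeas : ∀ i, Measurable (ξ i))
    (hindep : iIndepFun ξ μ)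
    (hident : ∀ i, μ.map (ξ i) = μ.map (ξ 1))
    (q β : ℝ) (hq : 0 ≤ q) (hβ : 0 ≤ β) (hqβ : 0 < max q β)
    (hsub : ENNReal.ofReal (Real.exp q)
      ≤ ∫⁻ ω, ENNReal.ofReal (Real.exp (β * ξ 1 ω)) ∂μ) :
    1 ≤ ∫⁻ ω, payoff q (fun z => Real.exp (β * z)) (walk 0 ξ)
          (hitFrom1 (walk 0 ξ) 0) ω ∂μ := by
  exact S12.final μ ξ hmeas hindep hident q β hq hβ hqβ hsub
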